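/- Let f : ℝ^d → ℝ be (H0,H1)-smooth with H0, H1 > 0, convex, and attain its minimum f* at x*. Run GD with warm-up step size η_k = θ·min{1/H0, 1/(3H1·F_k)}, F_k := f(x^k) − f*, with θ ∈ (0, 3/4]. Then for all k ≥ 0, ‖x^k − x*‖ ≤ ‖x^0 − x*‖. -/

import Mathlib

open scoped RealInnerProductSpace

noncomputable section

lemma line_hasDerivAt {d : ℕ} (f : EuclideanSpace ℝ (Fin d) → ℝ)
    (f' : EuclideanSpace ℝ (Fin d) → EuclideanSpace ℝ (Fin d))
    (hgrad : ∀ z, HasGradientAt f (f' z) z)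
    (x v : EuclideanSpace ℝ (Fin d)) (t : ℝ) :
    HasDerivAt (fun s : ℝ => f (x + s • v)) ⟪f' (x + t • v), v⟫ t := by
  have hc : HasDerivAt (fun s : ℝ => x + s • v) v t := by
    simpa using ((hasDerivAt_id t).smul_const v).const_add x
  have hf := hasGradientAt_iff_hasFDerivAt.1 (hgrad (x + t • v))
  have := hf.comp_hasDerivAt t hc
  exact this

lemma descent_lemma {d : ℕ} (f : EuclideanSpace ℝ (Fin d) → ℝ)
    (f' : EuclideanSpace ℝ (Fin d) → EuclideanSpace ℝ (Fin d))
    (L : ℝ) (_hL : 0 ≤ L) (x y : EuclideanSpace ℝ (Fin d))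
    (hgrad : ∀ z, HasGradientAt f (f' z) z)
    (hlip : ∀ t ∈ Set.Icc (0:ℝ) 1,
      ‖f' (x + t • (y - x)) - f' x‖ ≤ L * (t * ‖y - x‖)) :
    f y ≤ f x + ⟪f' x, y - x⟫ + L / 2 * ‖y - x‖ ^ 2 := by
  set v := y - x with hv
  set ψ : ℝ → ℝ := fun t => f (x + t • v) - t * ⟪f' x, v⟫ - L * t ^ 2 * ‖v‖ ^ 2 / 2 with hψ
  have hd : ∀ t : ℝ, HasDerivAt ψ
      (⟪f' (x + t • v), v⟫ - ⟪f' x, v⟫ - L * t * ‖v‖ ^ 2) t := by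
    intro t
    have h1 := line_hasDerivAt f f' hgrad x v t
    have h2 : HasDerivAt (fun s : ℝ => s * ⟪f' x, v⟫) ⟪f' x, v⟫ t := by
      simpa using (hasDerivAt_id t).mul_const ⟪f' x, v⟫
    have h3 : HasDerivAt (fun s : ℝ => L * s ^ 2 * ‖v‖ ^ 2 / 2)
        (L * t * ‖v‖ ^ 2) t := by
      have := ((hasDerivAt_pow 2 t).const_mul L).mul_const (‖v‖ ^ 2)
      have h4 := this.div_const 2
      convert h4 using 1
      · rfl
      · rfl
      · rw [show (2:ℕ) - 1 = 1 from rfl]; ring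
    exact (h1.sub h2).sub h3
  have mono : AntitoneOn ψ (Set.Icc 0 1) := by
    apply antitoneOn_of_deriv_nonpos (convex_Icc 0 1)
    · exact fun t _ => ((hd t).continuousAt).continuousWithinAt
    · intro t _
      exact (hd t).differentiableAt.differentiableWithinAt
    · intro t ht
      rw [interior_Icc] at ht
      rw [(hd t).deriv]
      have hip : ⟪f' (x + t • v), v⟫ - ⟪f' x, v⟫ = ⟪f' (x + t • v) - f' x, v⟫ := by
        rw [inner_sub_left]
      rw [hip]
      have h5 : ⟪f' (x + t • v) - f' x, v⟫ ≤ ‖f' (x + t • v) - f' x‖ * ‖v‖ :=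
        real_inner_le_norm _ _
      have h6 := hlip t ⟨le_of_lt ht.1, le_of_lt ht.2⟩
      nlinarith [norm_nonneg v, norm_nonneg (f' (x + t • v) - f' x)]
  have h01 : ψ 1 ≤ ψ 0 := mono (by norm_num) (by norm_num) (by norm_num)
  simp only [hψ, one_smul, zero_smul, add_zero] at h01
  have hxy : x + v = y := by rw [hv]; abel
  rw [hxy] at h01
  linarith

set_option maxHeartbeats 1000000 in
lemma grad_sq_bound {d : ℕ} (f : EuclideanSpace ℝ (Fin d) → ℝ)
    (f' : EuclideanSpace ℝ (Fin d) → EuclideanSpace ℝ (Fin d))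
    (H0 H1 : ℝ) (xstar : EuclideanSpace ℝ (Fin d))
    (hH0 : 0 < H0) (hH1 : 0 < H1)
    (hgrad : ∀ z, HasGradientAt f (f' z) z)
    (hsmooth : ∀ y z : EuclideanSpace ℝ (Fin d),
      Real.sqrt H1 * ‖z - y‖ ≤ 1 →
      ‖f' z - f' y‖ ≤ (H0 + H1 * (f y - f xstar)) * ‖z - y‖)
    (hmin : ∀ y, f xstar ≤ f y)
    (z : EuclideanSpace ℝ (Fin d)) :
    ‖f' z‖ ^ 2 ≤ (8/3) * (f z - f xstar) * max H0 (3 * H1 * (f z - f xstar)) := by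
  set F := f z - f xstar with hF
  set L := H0 + H1 * F with hLdef
  set M := max H0 (3 * H1 * F) with hM
  set G := ‖f' z‖ with hG
  have hF0 : 0 ≤ F := by have := hmin z; rw [hF]; linarith
  have hL : 0 < L := by rw [hLdef]; positivity
  have hM0 : 0 < M := lt_of_lt_of_le hH0 (le_max_left _ _)
  have hLM : L ≤ (4/3) * M := by
    have h1 : H0 ≤ M := le_max_left _ _
    have h2 : 3 * H1 * F ≤ M := le_max_right _ _
    rw [hLdef]; nlinarith
  have h2M : 3 * H1 * F ≤ M := le_max_right _ _
  have hG0 : 0 ≤ G := norm_nonneg _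
  by_cases hz : f' z = 0
  · rw [hG, hz]; simp; positivity
  have hGpos : 0 < G := by rw [hG]; exact norm_pos_iff.2 hz
  -- key inequality from descent + minimality
  have key : ∀ t : ℝ, 0 ≤ t → Real.sqrt H1 * t ≤ 1 → t * G - L * t ^ 2 / 2 ≤ F := by
    intro t ht hts
    set y := z - (t / G) • f' z with hy
    have hyz : y - z = -(t / G) • f' z := by rw [hy]; module
    have hnyz : ‖y - z‖ = t := by
      rw [hyz, norm_smul, Real.norm_eq_abs, abs_neg,
        abs_of_nonneg (div_nonneg ht hG0), ← hG]
      exact div_mul_cancel₀ t hGpos.ne'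
    have hlip : ∀ s ∈ Set.Icc (0:ℝ) 1,
        ‖f' (z + s • (y - z)) - f' z‖ ≤ L * (s * ‖y - z‖) := by
      intro s hs
      have hns : ‖(z + s • (y - z)) - z‖ = s * t := by
        simp [norm_smul, abs_of_nonneg hs.1, hnyz]
      have hcond : Real.sqrt H1 * ‖(z + s • (y - z)) - z‖ ≤ 1 := by
        rw [hns]
        have hst : s * t ≤ t := by nlinarith [hs.2]
        have := mul_le_mul_of_nonneg_left hst (Real.sqrt_nonneg H1)
        linarith
      have h7 := hsmooth z (z + s • (y - z)) hcond
      rw [hns] at h7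
      rw [hnyz, hLdef, hF]
      exact h7
    have hdes := descent_lemma f f' L hL.le z y hgrad hlip
    have hip : ⟪f' z, y - z⟫ = -(t * G) := by
      rw [hyz, real_inner_smul_right, real_inner_self_eq_norm_sq, ← hG]
      field_simp
    have hmy := hmin y
    rw [hip, hnyz] at hdes
    rw [hF]
    nlinarith
  clear_value F L M G
  by_cases hcase : Real.sqrt H1 * G ≤ L
  -- Case A : t = G / L
  · have hside : Real.sqrt H1 * (G / L) ≤ 1 := by
      have h1 : Real.sqrt H1 * (G / L) = Real.sqrt H1 * G / L := by ring
      rw [h1, div_le_one hL]; exact hcase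
    have ht := key (G / L) (by positivity) hside
    have hGL : G ^ 2 ≤ 2 * L * F := by
      have h1 : G / L * G - L * (G / L) ^ 2 / 2 = G ^ 2 / (2 * L) := by
        field_simp; ring
      rw [h1, div_le_iff₀ (by positivity)] at ht
      linarith
    nlinarith [mul_le_mul_of_nonneg_right hLM hF0]
  -- Case B
  · push_neg at hcase
    set s := Real.sqrt H1 with hs
    have hspos : 0 < s := Real.sqrt_pos.2 hH1
    have hs2 : s ^ 2 = H1 := Real.sq_sqrt hH1.le
    have ht := key (1 / s) (by positivity) (by
      rw [hs] at *; field_simp; exact le_rfl)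
    have hB : 2 * s * G - L ≤ F * (2 * s ^ 2) := by
      have h1 : (1 / s) * G - L * (1 / s) ^ 2 / 2 = (2 * s * G - L) / (2 * s ^ 2) := by
        field_simp
      rw [h1, div_le_iff₀ (by positivity)] at ht
      exact ht
    have hG2s : G ≤ 2 * F * s := by
      have h2 : s * G < 2 * F * s ^ 2 := by nlinarith
      nlinarith [hspos, mul_pos hspos hGpos]
    have h3 := h2M
    nlinarith [mul_self_le_mul_self hG0 hG2s,
      mul_le_mul_of_nonneg_left h3 hF0, hs2, mul_nonneg hF0 hM0.le]

/-- Monotone behavior of the distance to the optimum for GD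
with warm-up step size on a convex `(H0,H1)`-smooth function (`H0, H1 > 0`)
attaining its minimum at `x*`: with `η_k = θ / max{H0, 3H1 F_k}` (encoding
`θ·min{1/H0, 1/(3H1 F_k)}` with the convention `η_k = θ/H0` for `F_k = 0`)
and `θ ∈ (0, 3/4]`, `‖x^k - x*‖ ≤ ‖x^0 - x*‖` for all `k`. -/
theorem gd_warmup_distance_monotone
    {d : ℕ}
    (f : EuclideanSpace ℝ (Fin d) → ℝ)
    (f' : EuclideanSpace ℝ (Fin d) → EuclideanSpace ℝ (Fin d))
    (H0 H1 θ : ℝ)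
    (xstar : EuclideanSpace ℝ (Fin d))
    (x : ℕ → EuclideanSpace ℝ (Fin d))
    (hH0 : 0 < H0) (hH1 : 0 < H1)
    (hθ0 : 0 < θ) (hθ1 : θ ≤ 3 / 4)
    (hgrad : ∀ y, HasGradientAt f (f' y) y)
    (hsmooth : ∀ y z : EuclideanSpace ℝ (Fin d),
      Real.sqrt H1 * ‖z - y‖ ≤ 1 →
      ‖f' z - f' y‖ ≤ (H0 + H1 * (f y - f xstar)) * ‖z - y‖)
    -- convexity
    (hconvex : ∀ y z : EuclideanSpace ℝ (Fin d), f y - f z ≤ ⟪f' y, y - z⟫)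
    -- `f` attains its minimum `f*` at `xstar`
    (hmin : ∀ y, f xstar ≤ f y)
    -- GD with warm-up step size
    (hupdate : ∀ k, x (k + 1) =
      x k - (θ / max H0 (3 * H1 * (f (x k) - f xstar))) • f' (x k)) :
    ∀ k, ‖x k - xstar‖ ≤ ‖x 0 - xstar‖ := by
  have step : ∀ n, ‖x (n + 1) - xstar‖ ≤ ‖x n - xstar‖ := by
    intro n
    set F := f (x n) - f xstar with hF
    set M := max H0 (3 * H1 * F) with hM
    set η := θ / M with hη
    have hF0 : 0 ≤ F := by have := hmin (x n); rw [hF]; linarith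
    have hM0 : 0 < M := lt_of_lt_of_le hH0 (le_max_left _ _)
    have hηpos : 0 < η := by rw [hη]; positivity
    have hgb := grad_sq_bound f f' H0 H1 xstar hH0 hH1 hgrad hsmooth hmin (x n)
    rw [← hF, ← hM] at hgb
    have hconv : F ≤ ⟪f' (x n), x n - xstar⟫ := by
      have := hconvex (x n) xstar; rw [hF]; linarith
    have hstep : x (n + 1) - xstar = (x n - xstar) - η • f' (x n) := by
      rw [hupdate n, ← hF, ← hM, ← hη]; module
    set G := ‖f' (x n)‖ with hG
    have hG0 : 0 ≤ G := norm_nonneg _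
    clear_value F M η G
    have hsq : ‖x (n + 1) - xstar‖ ^ 2 ≤ ‖x n - xstar‖ ^ 2 := by
      rw [hstep, norm_sub_sq_real, real_inner_smul_right, norm_smul,
        Real.norm_eq_abs, abs_of_nonneg hηpos.le]
      have hipc : ⟪x n - xstar, f' (x n)⟫ = ⟪f' (x n), x n - xstar⟫ :=
        real_inner_comm _ _
      rw [hipc, mul_pow, ← hG]
      -- goal: ‖xn - x*‖² - 2(η⟪g, xn−x*⟫) + η²G² ≤ ‖xn−x*‖²
      have hθG : θ * G ^ 2 ≤ 2 * F * M := by nlinarith [sq_nonneg G]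
      have h1 : η ^ 2 * G ^ 2 ≤ 2 * η * F := by
        have h2 : η ^ 2 * G ^ 2 = (η / M) * (θ * G ^ 2) := by
          rw [hη]; field_simp
        have h3 : (η / M) * (θ * G ^ 2) ≤ (η / M) * (2 * F * M) :=
          mul_le_mul_of_nonneg_left hθG (by positivity)
        have h4 : (η / M) * (2 * F * M) = 2 * η * F := by
          field_simp
        linarith
      nlinarith [mul_le_mul_of_nonneg_left hconv hηpos.le]
    nlinarith [norm_nonneg (x (n + 1) - xstar), norm_nonneg (x n - xstar)]
  intro k
  induction k with
  | zero => exact le_refl _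
  | succ n ih => exact le_trans (step n) ih

end
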